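/- For the multivariate t density p on ℝ^d with ν degrees of freedom (identity scale, center 0), the unique mode is at y = 0, the negative log-density h(y) = ((ν+d)/2) log(1 + ‖y‖²/ν) + const has Hessian at 0 equal to ((ν+d)/ν) I_d, and the standard Laplace approximation of ∫ e^{-h} = 1 equals (2π ν/(ν+d))^{d/2} · Γ((ν+d)/2)/(Γ(ν/2)(νπ)^{d/2}), which tends to 0 as d → ∞ for fixed ν; hence the relative error of the Laplace approximation diverges with the dimension. -/

import Mathlib

open MeasureTheory Real Filter

private lemma twostep_tendsto (u : ℕ → ℝ) (hu : ∀ n, 0 ≤ u n) (s : ℝ) (hs0 : 0 < s)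
    (hs1 : s < 1) (N : ℕ) (hstep : ∀ n, N ≤ n → u (n + 2) ≤ s ^ 2 * u n) :
    Tendsto u atTop (nhds 0) := by
  set C : ℝ := max (u N) (u (N + 1) / s) with hC
  have hC0 : 0 ≤ C := le_trans (hu N) (le_max_left _ _)
  have key : ∀ k, u (N + k) ≤ C * s ^ k := by
    intro k
    induction k using Nat.strong_induction_on with
    | _ k ih =>
      match k with
      | 0 => simp only [Nat.add_zero, pow_zero, mul_one]; exact le_max_left _ _
      | 1 =>
        have h1 : u (N + 1) / s ≤ C := le_max_right _ _
        have := mul_le_mul_of_nonneg_right h1 hs0.le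
        rw [div_mul_cancel₀ _ hs0.ne'] at this
        simpa [pow_one] using this
      | (j + 2) =>
        have h1 : u (N + j + 2) ≤ s ^ 2 * u (N + j) := hstep (N + j) (Nat.le_add_right _ _)
        have h2 : u (N + j) ≤ C * s ^ j := ih j (by omega)
        calc u (N + (j + 2)) = u (N + j + 2) := by ring_nf
          _ ≤ s ^ 2 * u (N + j) := h1
          _ ≤ s ^ 2 * (C * s ^ j) := by
              exact mul_le_mul_of_nonneg_left h2 (sq_nonneg s)
          _ = C * s ^ (j + 2) := by ring
  have hgeo : Tendsto (fun k : ℕ => C * s ^ k) atTop (nhds 0) := by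
    simpa using (tendsto_pow_atTop_nhds_zero_of_lt_one hs0.le hs1).const_mul C
  have hshift : Tendsto (fun k : ℕ => u (k + N)) atTop (nhds 0) := by
    apply squeeze_zero (fun k => hu _) (fun k => ?_) hgeo
    rw [Nat.add_comm]; exact key k
  exact (tendsto_add_atTop_iff_nat N).1 hshift

private lemma limitAux (ν : ℝ) (hν : 0 < ν) :
    Tendsto (fun m : ℕ =>
        (2 * π * ν / (ν + m)) ^ ((m : ℝ) / 2) *
          (Real.Gamma ((ν + m) / 2) / (Real.Gamma (ν / 2) * (ν * π) ^ ((m : ℝ) / 2))))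
      atTop (nhds 0) := by
  have hπ : (0 : ℝ) < π := pi_pos
  have hGν : 0 < Real.Gamma (ν / 2) := Real.Gamma_pos_of_pos (by linarith)
  have hden : ∀ m : ℕ, (0 : ℝ) < ν + m := fun m => by positivity
  set g : ℕ → ℝ := fun m =>
    (2 / (ν + m)) ^ ((m : ℝ) / 2) * (Real.Gamma ((ν + m) / 2) / Real.Gamma (ν / 2)) with hg
  have heq : (fun m : ℕ =>
      (2 * π * ν / (ν + m)) ^ ((m : ℝ) / 2) *
        (Real.Gamma ((ν + m) / 2) / (Real.Gamma (ν / 2) * (ν * π) ^ ((m : ℝ) / 2)))) = g := by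
    funext m
    have h1 : (2 * π * ν / (ν + m)) ^ ((m : ℝ) / 2) / (ν * π) ^ ((m : ℝ) / 2)
        = (2 / (ν + m)) ^ ((m : ℝ) / 2) := by
      rw [← Real.div_rpow (by positivity) (by positivity : (0:ℝ) ≤ ν * π)]
      congr 1
      field_simp
    rw [hg]
    show _ = (2 / (ν + (m:ℝ))) ^ ((m:ℝ) / 2) * (Real.Gamma ((ν + m) / 2) / Real.Gamma (ν / 2))
    have hB : ((ν * π) ^ ((m:ℝ)/2)) ≠ 0 := by positivity
    have hA : ((ν + (m:ℝ)) : ℝ) ≠ 0 := (hden m).ne'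
    rw [← h1]
    field_simp
  rw [heq]
  apply twostep_tendsto g ?_ (Real.exp (-(1/4))) (Real.exp_pos _)
      (Real.exp_lt_one_iff.2 (by norm_num)) ⌈ν⌉₊ ?_
  · intro m
    have h1 : (0:ℝ) ≤ (2 / (ν + m)) ^ ((m:ℝ)/2) :=
      Real.rpow_nonneg (by positivity) _
    have h2 : 0 < Real.Gamma ((ν + m) / 2) := Real.Gamma_pos_of_pos (by positivity)
    rw [hg]
    positivity
  · intro n hn
    have hνn : ν ≤ (n:ℝ) + 2 := by
      have h1 : ν ≤ (⌈ν⌉₊ : ℝ) := Nat.le_ceil ν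
      have h2 : ((⌈ν⌉₊ : ℕ) : ℝ) ≤ (n : ℝ) := Nat.cast_le.2 hn
      linarith
    set A : ℝ := ν + n with hA
    set B : ℝ := ν + n + 2 with hB
    have hA0 : 0 < A := by positivity
    have hB0 : 0 < B := by positivity
    set p : ℝ := (n:ℝ)/2 with hp
    have hp0 : 0 ≤ p := by positivity
    have hq0 : 0 ≤ p + 1 := by positivity
    have hx0 : 0 < A / 2 := by positivity
    have hcast : ((n + 2 : ℕ) : ℝ) = (n : ℝ) + 2 := by push_cast; ring
    have hexp : Real.exp (-(1/4)) ^ 2 = Real.exp (-(1/2)) := by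
      rw [sq, ← Real.exp_add]; norm_num
    -- main inequality
    have hAB : A / B ≤ Real.exp (-(2 / B)) := by
      have := Real.add_one_le_exp (-(2 / B))
      have hABeq : A / B = -(2 / B) + 1 := by field_simp [hB]; linarith
      linarith
    have hABpow : (A / B) ^ (p + 1) ≤ Real.exp (-(1/2)) := by
      calc (A / B) ^ (p + 1) ≤ (Real.exp (-(2 / B))) ^ (p + 1) :=
            Real.rpow_le_rpow (by positivity) hAB hq0
        _ = Real.exp (-(2 / B) * (p + 1)) := (Real.exp_mul _ _).symm
        _ ≤ Real.exp (-(1/2)) := by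
            apply Real.exp_le_exp.2
            rw [neg_mul, neg_le_neg_iff, div_mul_eq_mul_div, le_div_iff₀ hB0]
            rw [hp, hB]
            nlinarith [hν.le]
    have hmain : (2 / B) ^ (p + 1) * (A / 2) ≤ Real.exp (-(1/2)) * (2 / A) ^ p := by
      have h2B : (2 / B) ^ (p + 1) = (2 / A) ^ (p + 1) * (A / B) ^ (p + 1) := by
        rw [← Real.mul_rpow (by positivity) (by positivity)]
        congr 1
        field_simp
      have h2A : (2 / A) ^ (p + 1) = (2 / A) ^ p * (2 / A) := by
        rw [Real.rpow_add_one (by positivity : (2 / A) ≠ 0)]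
      have hstep1 : (2 / B) ^ (p + 1) ≤ (2 / A) ^ (p + 1) * Real.exp (-(1/2)) := by
        rw [h2B]
        exact mul_le_mul_of_nonneg_left hABpow (Real.rpow_nonneg (by positivity) _)
      calc (2 / B) ^ (p + 1) * (A / 2)
          ≤ ((2 / A) ^ (p + 1) * Real.exp (-(1/2))) * (A / 2) :=
            mul_le_mul_of_nonneg_right hstep1 hx0.le
        _ = Real.exp (-(1/2)) * (2 / A) ^ p := by
            rw [h2A]
            field_simp
    -- assemble
    have hGamma : Real.Gamma ((ν + ((n + 2 : ℕ) : ℝ)) / 2)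
        = (A / 2) * Real.Gamma (A / 2) := by
      rw [hcast, show (ν + ((n:ℝ) + 2)) / 2 = A / 2 + 1 by rw [hA]; ring,
        Real.Gamma_add_one hx0.ne']
    have hGpos : 0 < Real.Gamma (A / 2) := Real.Gamma_pos_of_pos hx0
    rw [hg, hexp]
    show (2 / (ν + ((n + 2 : ℕ) : ℝ))) ^ (((n + 2 : ℕ) : ℝ) / 2) *
        (Real.Gamma ((ν + ((n + 2 : ℕ) : ℝ)) / 2) / Real.Gamma (ν / 2))
      ≤ Real.exp (-(1/2)) * ((2 / (ν + (n:ℝ))) ^ ((n:ℝ) / 2) *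
          (Real.Gamma ((ν + (n:ℝ)) / 2) / Real.Gamma (ν / 2)))
    rw [hGamma, hcast, show (ν + ((n:ℝ) + 2)) = B by rw [hB]; ring,
      show ((n:ℝ) + 2) / 2 = p + 1 by rw [hp]; ring,
      show (ν + (n:ℝ)) / 2 = A / 2 by rw [hA]]
    have hfinal := mul_le_mul_of_nonneg_right hmain
      (le_of_lt (div_pos hGpos hGν))
    calc (2 / B) ^ (p + 1) * ((A / 2) * Real.Gamma (A / 2) / Real.Gamma (ν / 2))
        = (2 / B) ^ (p + 1) * (A / 2) * (Real.Gamma (A / 2) / Real.Gamma (ν / 2)) := by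
          ring
      _ ≤ Real.exp (-(1/2)) * (2 / A) ^ p * (Real.Gamma (A / 2) / Real.Gamma (ν / 2)) :=
          hfinal
      _ = Real.exp (-(1/2)) * ((2 / A) ^ p * (Real.Gamma (A / 2) / Real.Gamma (ν / 2))) := by
          ring

/-- For the multivariate `t` density on `ℝ^d` (`ν` degrees of freedom, identity
scale, center `0`), the negative log-density `h` has unique minimum (mode of
the density) at `0`, Hessian `((ν+d)/ν)·I_d` at `0`, the standard Laplace
approximation of `∫ e^{-h} = 1` equals
`(2πν/(ν+d))^{d/2}·Γ((ν+d)/2)/(Γ(ν/2)(νπ)^{m/2})`, and this quantity tends to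
`0` as `d → ∞`: the relative error of the Laplace approximation diverges with
the dimension. -/
theorem stmt_17 (d : ℕ) (ν : ℝ) (hν : 0 < ν)
    (K : ℝ) (hK : K = Real.Gamma ((ν + d) / 2) /
      (Real.Gamma (ν / 2) * (ν * π) ^ ((d : ℝ) / 2)))
    (h : (Fin d → ℝ) → ℝ)
    (hh : ∀ y, h y = (ν + d) / 2 * Real.log (1 + (∑ i, y i ^ 2) / ν) - Real.log K) :
    (∀ y : Fin d → ℝ, y ≠ 0 → h 0 < h y) ∧
    (∀ i j : Fin d,
      fderiv ℝ (fun y => fderiv ℝ h y (Pi.single j 1)) 0 (Pi.single i 1) =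
        if i = j then (ν + d) / ν else 0) ∧
    (2 * π) ^ ((d : ℝ) / 2) * (((ν + d) / ν) ^ d) ^ (-(1/2) : ℝ) * Real.exp (-h 0) =
      (2 * π * ν / (ν + d)) ^ ((d : ℝ) / 2) *
        (Real.Gamma ((ν + d) / 2) / (Real.Gamma (ν / 2) * (ν * π) ^ ((d : ℝ) / 2))) ∧
    Tendsto (fun m : ℕ =>
        (2 * π * ν / (ν + m)) ^ ((m : ℝ) / 2) *
          (Real.Gamma ((ν + m) / 2) / (Real.Gamma (ν / 2) * (ν * π) ^ ((m : ℝ) / 2))))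
      atTop (nhds 0) := by
  have hπ : (0 : ℝ) < π := pi_pos
  set c : ℝ := (ν + d) / 2 with hc
  have hc0 : 0 < c := by positivity
  have hpos : ∀ y : Fin d → ℝ, 0 < 1 + (∑ i, y i ^ 2) / ν := by
    intro y; positivity
  have hh0 : h 0 = - Real.log K := by
    rw [hh 0]; simp
  refine ⟨?_, ?_, ?_, limitAux ν hν⟩
  · -- unique minimum at 0
    intro y hy
    obtain ⟨i, hi⟩ : ∃ i, y i ≠ 0 := Function.ne_iff.1 hy
    have hSpos : 0 < ∑ i, y i ^ 2 := by
      have h1 : y i ^ 2 ≤ ∑ j, y j ^ 2 :=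
        Finset.single_le_sum (fun j _ => sq_nonneg (y j)) (Finset.mem_univ i)
      have h2 : 0 < y i ^ 2 := by positivity
      linarith
    rw [hh0, hh y]
    have hlog : 0 < Real.log (1 + (∑ i, y i ^ 2) / ν) := by
      apply Real.log_pos
      have : 0 < (∑ i, y i ^ 2) / ν := by positivity
      linarith
    nlinarith
  · -- Hessian
    intro i j
    set P : Fin d → ((Fin d → ℝ) →L[ℝ] ℝ) :=
      fun i => ContinuousLinearMap.proj (R := ℝ) (φ := fun _ : Fin d => ℝ) i with hP
    have hSfd : ∀ y : Fin d → ℝ, HasFDerivAt (fun y : Fin d → ℝ => ∑ i, y i ^ 2)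
        (∑ i, ((2 : ℝ) * y i) • P i) y := by
      intro y
      refine HasFDerivAt.fun_sum fun i _ => ?_
      have hp : HasFDerivAt (fun y : Fin d → ℝ => y i) (P i) y := (P i).hasFDerivAt
      simpa [pow_two, two_mul, add_smul] using hp.fun_mul hp
    have hhfd : ∀ y : Fin d → ℝ, HasFDerivAt h
        ((c * ((1 / ν) / (1 + (∑ i, y i ^ 2) / ν))) • (∑ i, ((2 : ℝ) * y i) • P i)) y := by
      intro y
      have h1 : HasDerivAt (fun t : ℝ => 1 + t / ν) (1 / ν) (∑ i, y i ^ 2) := by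
        simpa using ((hasDerivAt_id (∑ i, y i ^ 2)).div_const ν).const_add 1
      have h2 := h1.log (hpos y).ne'
      have h3 := (h2.const_mul c).sub_const (Real.log K)
      have h4 := h3.comp_hasFDerivAt y (hSfd y)
      have hfun : h = (fun t : ℝ => c * Real.log (1 + t / ν) - Real.log K) ∘
          (fun y : Fin d → ℝ => ∑ i, y i ^ 2) := funext fun y => by
        simp [hh y, Function.comp, hc]
      rw [hfun]
      exact h4
    have hfderiv : ∀ (y : Fin d → ℝ) (j : Fin d), fderiv ℝ h y (Pi.single j 1) =
        (c * ((1 / ν) / (1 + (∑ i, y i ^ 2) / ν))) * (2 * y j) := by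
      intro y j
      rw [(hhfd y).fderiv]
      have hev : (∑ i, ((2 : ℝ) * y i) • P i) (Pi.single j 1) = 2 * y j := by
        simp [hP, ContinuousLinearMap.sum_apply, Pi.single_apply]
      rw [ContinuousLinearMap.smul_apply, hev, smul_eq_mul]
    have hfun2 : (fun y : Fin d → ℝ => fderiv ℝ h y (Pi.single j 1)) =
        fun y : Fin d → ℝ => (c * ((1 / ν) / (1 + (∑ i, y i ^ 2) / ν))) * (2 * y j) :=
      funext fun y => hfderiv y j
    rw [hfun2]
    have hSd : DifferentiableAt ℝ (fun y : Fin d → ℝ => ∑ i, y i ^ 2) 0 :=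
      (hSfd 0).differentiableAt
    have ha : DifferentiableAt ℝ
        (fun y : Fin d → ℝ => c * ((1 / ν) / (1 + (∑ i, y i ^ 2) / ν))) 0 := by
      have h1 : HasDerivAt (fun t : ℝ => 1 + t / ν) (1 / ν) (0 : ℝ) := by
        simpa using ((hasDerivAt_id (0 : ℝ)).div_const ν).const_add 1
      have h2 := ((hasDerivAt_const (0 : ℝ) (1 / ν)).div h1
        (by norm_num : (1 : ℝ) + 0 / ν ≠ 0)).const_mul c
      have h3 := h2.comp_hasFDerivAt_of_eq 0 (hSfd 0) (by simp)
      simpa [Function.comp_def] using h3.differentiableAt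
    have hb : HasFDerivAt (fun y : Fin d → ℝ => 2 * y j) ((2 : ℝ) • P j) 0 :=
      (P j).hasFDerivAt.const_mul 2
    rw [fderiv_fun_mul ha hb.differentiableAt, hb.fderiv]
    have hval : (∑ i, (0 : Fin d → ℝ) i ^ 2) = 0 := by simp
    rcases eq_or_ne i j with hij | hij
    · subst hij
      simp [ContinuousLinearMap.add_apply, ContinuousLinearMap.smul_apply,
        hval, Pi.single_apply, hP]
      field_simp [hc]
      ring
    · simp [ContinuousLinearMap.add_apply, ContinuousLinearMap.smul_apply,
        hval, Pi.single_apply, hP, hij, Ne.symm hij]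
  · -- Laplace approximation value
    have hKpos : 0 < K := by
      rw [hK]
      have h1 : 0 < Real.Gamma ((ν + d) / 2) := Real.Gamma_pos_of_pos (by positivity)
      have h2 : 0 < Real.Gamma (ν / 2) := Real.Gamma_pos_of_pos (by positivity)
      positivity
    rw [hh0, neg_neg, Real.exp_log hKpos, ← hK]
    congr 1
    have hb : (0 : ℝ) < (ν + d) / ν := by positivity
    rw [← Real.rpow_natCast ((ν + d) / ν) d, ← Real.rpow_mul hb.le,
      show (d : ℝ) * (-(1/2)) = -((d : ℝ) / 2) by ring,
      Real.rpow_neg hb.le, ← Real.inv_rpow hb.le,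
      show ((ν + d) / ν)⁻¹ = ν / (ν + d) by rw [inv_div],
      ← Real.mul_rpow (by positivity) (by positivity)]
    congr 1
    ring
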